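/- Let L be an n×n Metzler matrix with nonpositive row sums (L_{ij} ≥ 0 for i≠j, Σ_j L_{ij} ≤ 0), let κ > 0, set L^κ = L - κI, and let N : ℝ → ℝ satisfy |N(ξ)| ≤ κβ for |ξ| ≤ β. If U ∈ ℝⁿ satisfies ‖U‖_∞ ≤ β, then the ETD1 update U⁺ = e^{τ L^κ} U + τ φ₁(τ L^κ) N(U) (with N applied entrywise and φ₁(A) = A⁻¹(e^{A} - I)) satisfies ‖U⁺‖_∞ ≤ β for every τ > 0. -/

import Mathlib

open scoped Matrix

open NormedSpace

section Aux

variable {m : Type*} [Fintype m] [DecidableEq m]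

theorem myexp_entry_summable (A : Matrix m m ℝ) (i j : m) :
    Summable fun k : ℕ => ((Nat.factorial k : ℝ))⁻¹ • ((A ^ k) i j) := by
  letI : SeminormedRing (Matrix m m ℝ) := Matrix.linftyOpSemiNormedRing
  letI : NormedRing (Matrix m m ℝ) := Matrix.linftyOpNormedRing
  letI : NormedAlgebra ℝ (Matrix m m ℝ) := Matrix.linftyOpNormedAlgebra
  have hs : Summable fun k : ℕ => ((Nat.factorial k : ℝ))⁻¹ • A ^ k :=
    expSeries_summable' (𝕂 := ℝ) A
  have h1 : Summable fun k : ℕ => (((Nat.factorial k : ℝ))⁻¹ • A ^ k) i :=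
    Summable.map hs (ContinuousLinearMap.proj (R := ℝ) i)
      ((ContinuousLinearMap.proj i).continuous)
  exact Summable.map h1 (ContinuousLinearMap.proj (R := ℝ) j)
      ((ContinuousLinearMap.proj j).continuous)

theorem myexp_entry (A : Matrix m m ℝ) (i j : m) :
    exp A i j = ∑' k : ℕ, ((Nat.factorial k : ℝ))⁻¹ • ((A ^ k) i j) := by
  letI : SeminormedRing (Matrix m m ℝ) := Matrix.linftyOpSemiNormedRing
  letI : NormedRing (Matrix m m ℝ) := Matrix.linftyOpNormedRing
  letI : NormedAlgebra ℝ (Matrix m m ℝ) := Matrix.linftyOpNormedAlgebra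
  have hs : Summable fun k : ℕ => ((Nat.factorial k : ℝ))⁻¹ • A ^ k :=
    expSeries_summable' (𝕂 := ℝ) A
  rw [exp_eq_tsum ℝ]
  have h1 := tsum_apply (f := fun k : ℕ => ((Nat.factorial k : ℝ))⁻¹ • A ^ k) (x := i) hs
  have hs2 : Summable fun k : ℕ => (((Nat.factorial k : ℝ))⁻¹ • A ^ k) i :=
    Summable.map hs (ContinuousLinearMap.proj (R := ℝ) i)
      ((ContinuousLinearMap.proj i).continuous)
  have h2 := tsum_apply (f := fun k : ℕ => (((Nat.factorial k : ℝ))⁻¹ • A ^ k) i) (x := j) hs2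
  exact (congrFun h1 j).trans h2

theorem myexp_add_smul_one (A : Matrix m m ℝ) (r : ℝ) :
    exp (A + r • (1 : Matrix m m ℝ)) = Real.exp r • exp A := by
  have hc : Commute A (r • (1 : Matrix m m ℝ)) := by
    simpa using (Commute.one_right A).smul_right r
  rw [Matrix.exp_add_of_commute A _ hc]
  have h1 : (r • (1 : Matrix m m ℝ)) = algebraMap ℝ _ r := by
    simp [Algebra.algebraMap_eq_smul_one]
  letI : SeminormedRing (Matrix m m ℝ) := Matrix.linftyOpSemiNormedRing
  letI : NormedRing (Matrix m m ℝ) := Matrix.linftyOpNormedRing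
  letI : NormedAlgebra ℝ (Matrix m m ℝ) := Matrix.linftyOpNormedAlgebra
  rw [h1]
  erw [← algebraMap_exp_comm]
  have : exp r = Real.exp r := by rw [Real.exp_eq_exp_ℝ]
  rw [this, Algebra.algebraMap_eq_smul_one]
  ext i j
  simp [Matrix.mul_smul]

theorem mypow_entry_nonneg {A : Matrix m m ℝ} (hA : ∀ i j, 0 ≤ A i j) (k : ℕ) :
    ∀ i j, 0 ≤ (A ^ k) i j := by
  induction k with
  | zero => intro i j; simp [Matrix.one_apply]; positivity
  | succ k ih =>
      intro i j
      rw [pow_succ, Matrix.mul_apply]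
      exact Finset.sum_nonneg fun x _ => mul_nonneg (ih i x) (hA x j)

theorem myexp_entry_nonneg {A : Matrix m m ℝ} (hA : ∀ i j, 0 ≤ A i j) (i j : m) :
    0 ≤ exp A i j := by
  rw [myexp_entry]
  refine tsum_nonneg fun k => smul_nonneg (by positivity) (mypow_entry_nonneg hA k i j)

/-- Entries of `exp (t•A)` are nonnegative for a Metzler matrix `A` and `t ≥ 0`. -/
theorem myexp_metzler_nonneg (A : Matrix m m ℝ) (hoff : ∀ i j, i ≠ j → 0 ≤ A i j)
    {t : ℝ} (ht : 0 ≤ t) (i j : m) : 0 ≤ exp (t • A) i j := by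
  set c : ℝ := ∑ k, |A k k| with hc
  have hdecomp : t • A = t • (A + c • (1 : Matrix m m ℝ)) + (-(t * c)) • 1 := by
    rw [smul_add, smul_smul, neg_smul, ← smul_smul, add_assoc, add_neg_cancel, add_zero]
  rw [hdecomp, myexp_add_smul_one]
  have hM : ∀ a b, 0 ≤ (t • (A + c • (1 : Matrix m m ℝ))) a b := by
    intro a b
    rcases eq_or_ne a b with rfl | hab
    · have h1 : |A a a| ≤ c := by
        exact Finset.single_le_sum (f := fun k => |A k k|) (fun k _ => abs_nonneg _)
          (Finset.mem_univ a)
      have : 0 ≤ A a a + c := by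
        have := neg_abs_le (A a a)
        linarith
      simpa [Matrix.smul_apply, Matrix.add_apply, Matrix.one_apply] using
        mul_nonneg ht this
    · have : 0 ≤ A a b := hoff a b hab
      simpa [Matrix.smul_apply, Matrix.add_apply, Matrix.one_apply, hab] using
        mul_nonneg ht this
  have := myexp_entry_nonneg hM i j
  simpa [Matrix.smul_apply] using mul_nonneg (Real.exp_nonneg _) this

end Aux

section RowSum

variable {n : ℕ}

/-- Row sums of `exp (t•A)` are at most 1 for a Metzler matrix with nonpositive
row sums, when `t ≥ 0`. Proved by completing `A` to a matrix with zero row sums. -/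
theorem myexp_rowsum_le_one (A : Matrix (Fin n) (Fin n) ℝ)
    (hoff : ∀ i j, i ≠ j → 0 ≤ A i j) (hrow : ∀ i, ∑ j, A i j ≤ 0)
    {t : ℝ} (ht : 0 ≤ t) (i : Fin n) :
    ∑ j, exp (t • A) i j ≤ 1 := by
  classical
  -- the completed matrix on `Fin n ⊕ Unit`
  set B : Matrix (Fin n) Unit ℝ := fun i _ => -∑ j, A i j with hB
  set C : Matrix (Fin n ⊕ Unit) (Fin n ⊕ Unit) ℝ := Matrix.fromBlocks A B 0 0 with hC
  -- C is Metzler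
  have hCoff : ∀ a b, a ≠ b → 0 ≤ C a b := by
    rintro (a | a) (b | b) hab
    · exact hoff a b (by simpa using hab)
    · simpa [hC, hB, Matrix.fromBlocks] using neg_nonneg.2 (hrow a)
    · simp [hC]
    · simp [hC]
  -- row sums of C are zero
  have hCrow : ∀ a, ∑ b, C a b = 0 := by
    rintro (a | a)
    · rw [Fintype.sum_sum_type]
      simp [hC, hB, Matrix.fromBlocks]
    · rw [Fintype.sum_sum_type]
      simp [hC]
  -- powers of C have row sums `if k = 0 then 1 else 0`
  have hpowrow : ∀ k : ℕ, ∀ a, ∑ b, (C ^ k) a b = if k = 0 then 1 else 0 := by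
    intro k
    induction k with
    | zero => intro a; simp [Matrix.one_apply]
    | succ k ih =>
        intro a
        have : ∑ b, (C ^ (k + 1)) a b = ∑ x, (C ^ k) a x * ∑ b, C x b := by
          simp only [pow_succ, Matrix.mul_apply, Finset.mul_sum]
          exact Finset.sum_comm
        rw [this]
        simp [hCrow]
  -- top-left block of powers of C agrees with powers of A
  have hpowblock : ∀ k : ℕ, ∀ a b : Fin n, (C ^ k) (Sum.inl a) (Sum.inl b) = (A ^ k) a b := by
    intro k
    induction k with
    | zero => intro a b; simp [Matrix.one_apply, Sum.inl.injEq]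
    | succ k ih =>
        intro a b
        rw [pow_succ, pow_succ, Matrix.mul_apply, Matrix.mul_apply, Fintype.sum_sum_type]
        have h2 : ∀ u : Unit, (C ^ k) (Sum.inl a) (Sum.inr u) * C (Sum.inr u) (Sum.inl b) = 0 := by
          intro u; simp [hC]
        simp only [h2, Finset.sum_const_zero, add_zero]
        refine Finset.sum_congr rfl fun x _ => ?_
        rw [ih a x]
        congr 1
  -- entries of exp (t•A) agree with top-left entries of exp (t•C)
  have hexpblock : ∀ a b : Fin n,
      exp (t • A) a b = exp (t • C) (Sum.inl a) (Sum.inl b) := by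
    intro a b
    rw [myexp_entry, myexp_entry]
    congr 1
    funext k
    rw [smul_pow, smul_pow]
    simp only [Matrix.smul_apply, hpowblock k a b]
  -- row sums of exp (t•C) equal 1
  have hexprow : ∑ b, exp (t • C) (Sum.inl i) b = 1 := by
    have hsum : ∀ b, exp (t • C) (Sum.inl i) b
        = ∑' k : ℕ, ((Nat.factorial k : ℝ))⁻¹ • (((t • C) ^ k) (Sum.inl i) b) := fun b =>
      myexp_entry _ _ _
    simp only [hsum]
    rw [← Summable.tsum_finsetSum (fun b _ => myexp_entry_summable (t • C) (Sum.inl i) b)]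
    have hterm : ∀ k : ℕ, (∑ b, ((Nat.factorial k : ℝ))⁻¹ • (((t • C) ^ k) (Sum.inl i) b))
        = if k = 0 then 1 else 0 := by
      intro k
      rw [← Finset.smul_sum]
      have : ∑ b, ((t • C) ^ k) (Sum.inl i) b = t ^ k * (if k = 0 then 1 else 0) := by
        rw [smul_pow]
        simp only [Matrix.smul_apply, smul_eq_mul]
        rw [← Finset.mul_sum, hpowrow k]
      rw [this]
      rcases Nat.eq_zero_or_pos k with rfl | hk
      · simp
      · simp [Nat.pos_iff_ne_zero.mp hk]
    calc (∑' k : ℕ, ∑ b, ((Nat.factorial k : ℝ))⁻¹ • (((t • C) ^ k) (Sum.inl i) b))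
        = ∑' k : ℕ, if k = 0 then (1:ℝ) else 0 := by
          congr 1; funext k; exact hterm k
      _ = 1 := by
          rw [tsum_eq_single 0 (fun k hk => by simp [hk])]
          simp
  -- conclude
  calc ∑ j, exp (t • A) i j
      = ∑ j, exp (t • C) (Sum.inl i) (Sum.inl j) := by
        exact Finset.sum_congr rfl fun j _ => hexpblock i j
    _ ≤ ∑ b, exp (t • C) (Sum.inl i) b := by
        rw [Fintype.sum_sum_type]
        have : 0 ≤ ∑ u : Unit, exp (t • C) (Sum.inl i) (Sum.inr u) :=
          Finset.sum_nonneg fun u _ => myexp_metzler_nonneg C hCoff ht _ _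
        linarith
    _ = 1 := hexprow

/-- The fundamental pointwise bound: `|((exp (t•(L-κI))) v)_i| ≤ e^{-tκ} ‖v‖`. -/
theorem mykey (L : Matrix (Fin n) (Fin n) ℝ)
    (hoff : ∀ i j, i ≠ j → 0 ≤ L i j) (hrow : ∀ i, ∑ j, L i j ≤ 0)
    (κ : ℝ) {t : ℝ} (ht : 0 ≤ t) (v : Fin n → ℝ) (i : Fin n) :
    |((exp (t • (L - κ • (1 : Matrix (Fin n) (Fin n) ℝ)))).mulVec v) i|
      ≤ Real.exp (-(t * κ)) * ‖v‖ := by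
  have hdecomp : t • (L - κ • (1 : Matrix (Fin n) (Fin n) ℝ))
      = t • L + (-(t * κ)) • 1 := by
    ext a b
    simp [Matrix.sub_apply, Matrix.smul_apply, Matrix.one_apply, mul_sub]
    ring_nf
  rw [hdecomp, myexp_add_smul_one]
  have hE := fun a b => myexp_metzler_nonneg L hoff ht a b
  have hR := myexp_rowsum_le_one L hoff hrow ht i
  rw [Matrix.smul_mulVec, Pi.smul_apply, smul_eq_mul, abs_mul,
    abs_of_nonneg (Real.exp_nonneg _)]
  rw [Matrix.mulVec, dotProduct]
  refine mul_le_mul_of_nonneg_left ?_ (Real.exp_nonneg _)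
  calc |∑ j, exp (t • L) i j * v j|
      ≤ ∑ j, |exp (t • L) i j * v j| := Finset.abs_sum_le_sum_abs _ _
    _ ≤ ∑ j, exp (t • L) i j * ‖v‖ := by
        refine Finset.sum_le_sum fun j _ => ?_
        rw [abs_mul, abs_of_nonneg (hE i j)]
        exact mul_le_mul_of_nonneg_left (by simpa using norm_le_pi_norm v j) (hE i j)
    _ = (∑ j, exp (t • L) i j) * ‖v‖ := by rw [Finset.sum_mul]
    _ ≤ 1 * ‖v‖ := mul_le_mul_of_nonneg_right hR (norm_nonneg v)
    _ = ‖v‖ := one_mul _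

theorem myexp_smul_continuous (A : Matrix (Fin n) (Fin n) ℝ) :
    Continuous fun s : ℝ => exp (s • A) := by
  letI : SeminormedRing (Matrix (Fin n) (Fin n) ℝ) := Matrix.linftyOpSemiNormedRing
  letI : NormedRing (Matrix (Fin n) (Fin n) ℝ) := Matrix.linftyOpNormedRing
  letI : NormedAlgebra ℝ (Matrix (Fin n) (Fin n) ℝ) := Matrix.linftyOpNormedAlgebra
  letI : NormedAlgebra ℚ (Matrix (Fin n) (Fin n) ℝ) := Matrix.linftyOpNormedAlgebra
  exact exp_continuous.comp (continuous_id.smul continuous_const)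

end RowSum

theorem stmt_10 {n : ℕ} (L : Matrix (Fin n) (Fin n) ℝ)
    (hoff : ∀ i j, i ≠ j → 0 ≤ L i j)
    (hrow : ∀ i, ∑ j, L i j ≤ 0)
    (κ β τ : ℝ) (hκ : 0 < κ) (hβ : 0 < β) (hτ : 0 < τ)
    (N : ℝ → ℝ) (hN : ∀ ξ : ℝ, |ξ| ≤ β → |N ξ| ≤ κ * β)
    (U : Fin n → ℝ) (hU : ‖U‖ ≤ β) :
    ‖(NormedSpace.exp (τ • (L - κ • (1 : Matrix (Fin n) (Fin n) ℝ)))).mulVec U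
        + ∫ s in (0 : ℝ)..τ,
            (NormedSpace.exp ((τ - s) • (L - κ • (1 : Matrix (Fin n) (Fin n) ℝ)))).mulVec
              (fun i => N (U i))‖ ≤ β := by
  classical
  set Lκ : Matrix (Fin n) (Fin n) ℝ := L - κ • (1 : Matrix (Fin n) (Fin n) ℝ) with hLκ
  set NU : Fin n → ℝ := fun i => N (U i) with hNU
  have hNUnorm : ‖NU‖ ≤ κ * β := by
    rw [pi_norm_le_iff_of_nonneg (by positivity)]
    intro i
    refine hN (U i) ?_
    simpa using (norm_le_pi_norm U i).trans hU
  -- continuity / integrability of the integrand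
  have hcont : Continuous fun s : ℝ => (exp ((τ - s) • Lκ)).mulVec NU := by
    have h1 : Continuous fun s : ℝ => exp ((τ - s) • Lκ) :=
      (myexp_smul_continuous Lκ).comp (continuous_const.sub continuous_id)
    have h2 : Continuous fun M : Matrix (Fin n) (Fin n) ℝ => M.mulVec NU := by
      refine continuous_pi fun i => ?_
      simp only [Matrix.mulVec, dotProduct]
      exact continuous_finset_sum _ fun j _ =>
        ((continuous_apply_apply i j).mul continuous_const)
    exact h2.comp h1
  have hint : IntervalIntegrable (fun s : ℝ => (exp ((τ - s) • Lκ)).mulVec NU)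
      MeasureTheory.volume 0 τ := hcont.intervalIntegrable 0 τ
  -- entrywise bound
  rw [pi_norm_le_iff_of_nonneg hβ.le]
  intro i
  rw [Pi.add_apply]
  -- the i-th entry of the integral
  have hswap : (∫ s in (0:ℝ)..τ, (exp ((τ - s) • Lκ)).mulVec NU) i
      = ∫ s in (0:ℝ)..τ, ((exp ((τ - s) • Lκ)).mulVec NU) i := by
    exact ((ContinuousLinearMap.proj (R := ℝ) (φ := fun _ : Fin n => ℝ)
      i).intervalIntegral_comp_comm hint).symm
  have habs1 : |((exp (τ • Lκ)).mulVec U) i| ≤ Real.exp (-(τ * κ)) * β := by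
    refine (mykey L hoff hrow κ hτ.le U i).trans ?_
    exact mul_le_mul_of_nonneg_left hU (Real.exp_nonneg _)
  -- bound the integral entry
  have hptwise : ∀ s ∈ Set.Icc (0:ℝ) τ,
      |((exp ((τ - s) • Lκ)).mulVec NU) i| ≤ Real.exp (-((τ - s) * κ)) * (κ * β) := by
    intro s hs
    refine (mykey L hoff hrow κ (by cases hs; linarith) NU i).trans ?_
    exact mul_le_mul_of_nonneg_left hNUnorm (Real.exp_nonneg _)
  have hgint : IntervalIntegrable (fun s : ℝ => Real.exp (-((τ - s) * κ)) * (κ * β))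
      MeasureTheory.volume 0 τ := by
    apply Continuous.intervalIntegrable
    exact (Real.continuous_exp.comp
      (((continuous_const.sub continuous_id).mul continuous_const).neg)).mul continuous_const
  have hfabsint : IntervalIntegrable (fun s : ℝ => |((exp ((τ - s) • Lκ)).mulVec NU) i|)
      MeasureTheory.volume 0 τ := by
    apply Continuous.intervalIntegrable
    exact (continuous_abs.comp ((continuous_apply i).comp hcont))
  have hIbound : |(∫ s in (0:ℝ)..τ, (exp ((τ - s) • Lκ)).mulVec NU) i|
      ≤ ∫ s in (0:ℝ)..τ, Real.exp (-((τ - s) * κ)) * (κ * β) := by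
    rw [hswap]
    calc |∫ s in (0:ℝ)..τ, ((exp ((τ - s) • Lκ)).mulVec NU) i|
        ≤ ∫ s in (0:ℝ)..τ, |((exp ((τ - s) • Lκ)).mulVec NU) i| := by
          simpa using intervalIntegral.norm_integral_le_integral_norm
            (f := fun s => ((exp ((τ - s) • Lκ)).mulVec NU) i) hτ.le
      _ ≤ ∫ s in (0:ℝ)..τ, Real.exp (-((τ - s) * κ)) * (κ * β) := by
          refine intervalIntegral.integral_mono_on hτ.le hfabsint hgint ?_
          intro s hs; exact hptwise s hs
  -- compute the integral of the bound
  have hIval : (∫ s in (0:ℝ)..τ, Real.exp (-((τ - s) * κ)) * (κ * β))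
      = β * (1 - Real.exp (-(τ * κ))) := by
    have hderiv : ∀ s ∈ Set.uIcc (0:ℝ) τ,
        HasDerivAt (fun u : ℝ => Real.exp (-((τ - u) * κ)) * (β))
          (Real.exp (-((τ - s) * κ)) * (κ * β)) s := by
      intro s _
      have h1 : HasDerivAt (fun u : ℝ => -((τ - u) * κ)) κ s := by
        have := ((hasDerivAt_id s).const_sub τ).mul_const κ
        have h2 := this.neg
        exact h2.congr_deriv (by ring)
      have := (Real.hasDerivAt_exp _).comp s h1
      have h3 := this.mul_const β
      exact h3.congr_deriv (by ring)
    have := intervalIntegral.integral_eq_sub_of_hasDerivAt hderiv hgint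
    rw [this]
    simp
    ring
  have htriangle : |((exp (τ • Lκ)).mulVec U) i
      + (∫ s in (0:ℝ)..τ, (exp ((τ - s) • Lκ)).mulVec NU) i|
      ≤ Real.exp (-(τ * κ)) * β + β * (1 - Real.exp (-(τ * κ))) := by
    refine (abs_add_le _ _).trans ?_
    exact add_le_add habs1 (hIbound.trans (le_of_eq hIval))
  calc ‖((exp (τ • Lκ)).mulVec U) i
      + (∫ s in (0:ℝ)..τ, (exp ((τ - s) • Lκ)).mulVec NU) i‖
      = |((exp (τ • Lκ)).mulVec U) i
      + (∫ s in (0:ℝ)..τ, (exp ((τ - s) • Lκ)).mulVec NU) i| := rfl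
    _ ≤ Real.exp (-(τ * κ)) * β + β * (1 - Real.exp (-(τ * κ))) := htriangle
    _ = β := by ring
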